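/- arXiv:0903.5418 — 4 statements merged into one kernel-verified Lean document; each statement's English description precedes it below -/
import Mathlib

section
/- Let G be a group in which any two squares commute, i.e. a²·b² = b²·a² for all a, b ∈ G. Then (x·y)² · x⁻² · y⁻² = ⁅x⁻¹, y⁆ for all x, y ∈ G. -/
open scoped commutatorElement

/-- In a group in which any two squares commute,
`(x·y)² · x⁻² · y⁻² = ⁅x⁻¹, y⁆` holds for all `x, y`. -/
theorem stmt_9 {G : Type*} [Group G] (h : ∀ a b : G, a ^ 2 * b ^ 2 = b ^ 2 * a ^ 2) :
    ∀ x y : G, (x * y) ^ 2 * x⁻¹ ^ 2 * y⁻¹ ^ 2 = ⁅x⁻¹, y⁆ := by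
  intro x y
  have := h (x * y) x⁻¹
  calc (x * y) ^ 2 * x⁻¹ ^ 2 * y⁻¹ ^ 2 = x⁻¹ ^ 2 * (x * y) ^ 2 * y⁻¹ ^ 2 := by rw [this]
    _ = ⁅x⁻¹, y⁆ := by simp [sq, commutatorElement_def, mul_assoc]
end

section
/- Let p be a prime and G a group such that the commutator subgroup G' has order p, the subgroup G'·G^(p) is contained in the centre Z(G), and the index of Z(G) in G is finite. Then [G : Z(G)] = p^(2r) for some natural number r ≥ 1. -/
open LinearMap (BilinForm)
open Module
open scoped commutatorElement

universe u v

lemma even_aux (K : Type u) [Field K] : ∀ (n : ℕ), ∀ (V : Type v) [AddCommGroup V] [Module K V]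
    [FiniteDimensional K V] (B : BilinForm K V), B.IsAlt → B.Nondegenerate →
    finrank K V = n → Even n := by
  intro n
  induction n using Nat.strong_induction_on with
  | _ n ih =>
  intro V _ _ _ B halt hnd hn
  rcases Nat.eq_zero_or_pos n with h0 | hpos
  · simp [h0]
  have : Nontrivial V := by
    rw [← Module.finrank_pos_iff (R := K)]; omega
  obtain ⟨x, hx⟩ := exists_ne (0 : V)
  obtain ⟨y, hxy⟩ : ∃ y, B x y ≠ 0 := by
    by_contra h
    push_neg at h
    exact hx (hnd.1 x (by simpa using h))
  have hli : LinearIndependent K ![x, y] := by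
    rw [LinearIndependent.pair_iff]
    intro s t hst
    have h1 : B x (s • x + t • y) = t * B x y := by
      simp [halt x]
    rw [hst, map_zero] at h1
    have ht : t = 0 := by
      rcases mul_eq_zero.mp h1.symm with h | h
      · exact h
      · exact absurd h hxy
    subst ht
    simp only [zero_smul, add_zero] at hst
    have hs : s = 0 := by
      by_contra hs
      exact hx (by simpa [hs] using hst)
    exact ⟨hs, rfl⟩
  set W : Submodule K V := Submodule.span K {x, y} with hW
  have hfW : finrank K W = 2 := by
    have h := finrank_span_eq_card (R := K) hli
    have : Set.range ![x, y] = {x, y} := by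
      simp [Set.range_subset_iff]
      ext z; simp [Matrix.range_cons]; tauto
    rw [this] at h
    simpa using h
  -- membership facts
  have hxW : x ∈ W := Submodule.subset_span (by simp)
  have hyW : y ∈ W := Submodule.subset_span (by simp)
  -- restriction to W is nondegenerate
  have hndW : (B.restrict W).Nondegenerate := by
    refine (LinearMap.IsRefl.nondegenerate_iff_separatingLeft (B := B.restrict W) (fun a b h => halt.isRefl _ _ h)).mpr ?_
    intro ⟨w, hw⟩ h
    have hx' := h ⟨x, hxW⟩
    have hy' := h ⟨y, hyW⟩
    simp only [LinearMap.BilinForm.restrict_apply] at hx' hy'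
    obtain ⟨s, t, rfl⟩ : ∃ s t : K, w = s • x + t • y := by
      have := hw
      rw [hW, Submodule.mem_span_pair] at this
      obtain ⟨a, b, hab⟩ := this
      exact ⟨a, b, hab.symm⟩
    have e1 : B (s • x + t • y) x = t * B y x := by simp [halt x]
    have e2 : B (s • x + t • y) y = s * B x y := by simp [halt y]
    have hyx : B y x ≠ 0 := fun h0 => hxy (by rw [← halt.neg_eq y x, h0, neg_zero])
    have ht : t = 0 := by
      rcases mul_eq_zero.mp (e1 ▸ hx') with h | h
      · exact h
      · exact absurd h hyx
    have hs : s = 0 := by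
      rcases mul_eq_zero.mp (e2 ▸ hy') with h | h
      · exact h
      · exact absurd h hxy
    simp [hs, ht]
  have hrefl : B.IsRefl := halt.isRefl
  -- complement
  have hcompl : IsCompl W (B.orthogonal W) :=
    B.isCompl_orthogonal_of_restrict_nondegenerate hrefl hndW
  set W' := B.orthogonal W with hW'
  have hndW' : (B.restrict W').Nondegenerate := by
    rw [LinearMap.BilinForm.restrict_nondegenerate_iff_isCompl_orthogonal hrefl]
    rw [hW', LinearMap.BilinForm.orthogonal_orthogonal hnd hrefl]
    exact hcompl.symm
  have haltW' : (B.restrict W').IsAlt := fun w => halt w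
  have hdim : finrank K W' = n - 2 := by
    have := Submodule.finrank_add_eq_of_isCompl hcompl
    omega
  have h2 : 2 ≤ n := by
    have := Submodule.finrank_le W
    rw [hfW] at this
    have := Submodule.finrank_add_eq_of_isCompl hcompl
    omega
  have := ih (n - 2) (by omega) W' (B.restrict W') haltW' hndW' hdim
  obtain ⟨r, hr⟩ := this
  exact ⟨r + 1, by omega⟩

lemma even_finrank_of_alt_nondeg {K : Type u} {V : Type v} [Field K] [AddCommGroup V] [Module K V]
    [FiniteDimensional K V] (B : BilinForm K V) (halt : B.IsAlt) (hnd : B.Nondegenerate) :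
    Even (finrank K V) :=
  even_aux K (finrank K V) V B halt hnd rfl

/-- Let `p` be a prime and `G` a group such that the commutator
subgroup `G'` has order `p`, the subgroup `G'·G^(p)` lies in the centre of
`G`, and the centre has finite index. Then `[G : Z(G)] = p ^ (2r)` for some
natural number `r ≥ 1`. -/
theorem stmt_12 {G : Type*} [Group G] (p : ℕ) (hp : p.Prime)
    (hcard : Nat.card (commutator G) = p)
    (hle : Subgroup.closure ((commutator G : Set G) ∪ {g : G | ∃ x : G, g = x ^ p}) ≤
      Subgroup.center G)
    (hfin : (Subgroup.center G).index ≠ 0) :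
    ∃ r : ℕ, 1 ≤ r ∧ (Subgroup.center G).index = p ^ (2 * r) := by
  haveI := Fact.mk hp
  haveI : NeZero p := ⟨hp.ne_zero⟩
  have hcomm : commutator G ≤ Subgroup.center G := fun g hg =>
    hle (Subgroup.subset_closure (Or.inl hg))
  have hpow : ∀ x : G, x ^ p ∈ Subgroup.center G := fun x =>
    hle (Subgroup.subset_closure (Or.inr ⟨x, rfl⟩))
  have hmemC : ∀ x y : G, ⁅x, y⁆ ∈ commutator G := fun x y =>
    Subgroup.commutator_mem_commutator (Subgroup.mem_top x) (Subgroup.mem_top y)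
  have hcen : ∀ x y : G, ⁅x, y⁆ ∈ Subgroup.center G := fun x y => hcomm (hmemC x y)
  have hcen' : ∀ x y : G, ∀ g : G, g * ⁅x, y⁆ = ⁅x, y⁆ * g := fun x y =>
    Subgroup.mem_center_iff.mp (hcen x y)
  have hone : ∀ (x z : G), z ∈ Subgroup.center G → ⁅x, z⁆ = 1 := by
    intro x z hz
    rw [commutatorElement_eq_one_iff_mul_comm]
    exact Subgroup.mem_center_iff.mp hz x
  have hone' : ∀ (x z : G), z ∈ Subgroup.center G → ⁅z, x⁆ = 1 := by
    intro x z hz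
    rw [commutatorElement_eq_one_iff_mul_comm]
    exact (Subgroup.mem_center_iff.mp hz x).symm
  -- bilinearity identities
  have key_r : ∀ x y z : G, ⁅x, y * z⁆ = ⁅x, y⁆ * ⁅x, z⁆ := by
    intro x y z
    have h1 : ⁅x, y * z⁆ = ⁅x, y⁆ * (y * ⁅x, z⁆ * y⁻¹) := by
      simp only [commutatorElement_def]; group
    rw [h1, hcen' x z y, mul_inv_cancel_right]
  have key_l : ∀ x y z : G, ⁅x * y, z⁆ = ⁅x, z⁆ * ⁅y, z⁆ := by
    intro x y z
    have h1 : ⁅x * y, z⁆ = (x * ⁅y, z⁆ * x⁻¹) * ⁅x, z⁆ := by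
      simp only [commutatorElement_def]; group
    rw [h1, hcen' y z x, mul_inv_cancel_right, hcen' x z]
  -- the quotient V := G ⧸ center is a comm group
  letI instCG : CommGroup (G ⧸ Subgroup.center G) :=
    { (inferInstance : Group (G ⧸ Subgroup.center G)) with
      mul_comm := by
        intro a b
        induction a using QuotientGroup.induction_on with | _ x =>
        induction b using QuotientGroup.induction_on with | _ y =>
        rw [← QuotientGroup.mk_mul, ← QuotientGroup.mk_mul, QuotientGroup.eq]
        have h : (x * y)⁻¹ * (y * x) = ⁅y⁻¹, x⁻¹⁆ := by
          simp only [commutatorElement_def]; group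
        rw [h]
        exact hcen y⁻¹ x⁻¹ }
  letI instM : Module (ZMod p) (Additive (G ⧸ Subgroup.center G)) :=
    AddCommGroup.zmodModule (by
      have h : ∀ v : G ⧸ Subgroup.center G, p • Additive.ofMul v = 0 := by
        intro v
        induction v using QuotientGroup.induction_on with | _ x =>
        rw [← ofMul_pow]
        have : ((QuotientGroup.mk x : G ⧸ Subgroup.center G)) ^ p = 1 := by
          rw [← QuotientGroup.mk_pow]
          exact (QuotientGroup.eq_one_iff (x ^ p)).mpr (hpow x)
        rw [this]; rfl
      exact fun a => h (Additive.toMul a))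
  -- iso from commutator subgroup to ZMod p
  have hcardM : Nat.card (Multiplicative (ZMod p)) = p := by
    rw [Nat.card_congr (Multiplicative.ofAdd (α := ZMod p)).symm, Nat.card_zmod]
  have e : (commutator G) ≃* Multiplicative (ZMod p) :=
    mulEquivOfPrimeCardEq hcard hcardM
  -- inner homs G →* Multiplicative (ZMod p)
  let inner : G → G →* Multiplicative (ZMod p) := fun x =>
    { toFun := fun y => e ⟨⁅x, y⁆, hmemC x y⟩
      map_one' := by
        show e ⟨⁅x, 1⁆, hmemC x 1⟩ = 1
        have h : (⟨⁅x, 1⁆, hmemC x 1⟩ : commutator G) = 1 := by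
          ext; simp
        rw [h, map_one]
      map_mul' := by
        intro y z
        show e ⟨⁅x, y * z⁆, hmemC x (y * z)⟩ = e ⟨⁅x, y⁆, hmemC x y⟩ * e ⟨⁅x, z⁆, hmemC x z⟩
        have h : (⟨⁅x, y * z⁆, hmemC x (y * z)⟩ : commutator G) =
            ⟨⁅x, y⁆, hmemC x y⟩ * ⟨⁅x, z⁆, hmemC x z⟩ := by
          ext; exact key_r x y z
        rw [h, map_mul] }
  let ψ : G → (G ⧸ Subgroup.center G) →* Multiplicative (ZMod p) := fun x =>
    QuotientGroup.lift _ (inner x) (by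
      intro z hz
      show e ⟨⁅x, z⁆, hmemC x z⟩ = 1
      have h : (⟨⁅x, z⁆, hmemC x z⟩ : commutator G) = 1 := by
        ext; exact hone x z hz
      rw [h, map_one])
  let Φ0 : G →* ((G ⧸ Subgroup.center G) →* Multiplicative (ZMod p)) :=
    { toFun := ψ
      map_one' := by
        refine MonoidHom.ext fun v => ?_
        induction v using QuotientGroup.induction_on with | _ y =>
        show e ⟨⁅(1 : G), y⁆, hmemC 1 y⟩ = 1
        have h : (⟨⁅(1 : G), y⁆, hmemC 1 y⟩ : commutator G) = 1 := by
          ext; exact commutatorElement_one_left y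
        rw [h, map_one]
      map_mul' := by
        intro x y
        refine MonoidHom.ext fun v => ?_
        induction v using QuotientGroup.induction_on with | _ z =>
        show e ⟨⁅x * y, z⁆, hmemC _ z⟩ = e ⟨⁅x, z⁆, hmemC x z⟩ * e ⟨⁅y, z⁆, hmemC y z⟩
        have h : (⟨⁅x * y, z⁆, hmemC _ z⟩ : commutator G) =
            ⟨⁅x, z⁆, hmemC x z⟩ * ⟨⁅y, z⁆, hmemC y z⟩ := by
          ext; exact key_l x y z
        rw [h, map_mul] }
  let Φ : (G ⧸ Subgroup.center G) →* ((G ⧸ Subgroup.center G) →* Multiplicative (ZMod p)) :=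
    QuotientGroup.lift _ Φ0 (by
      intro z hz
      refine MonoidHom.ext fun v => ?_
      induction v using QuotientGroup.induction_on with | _ y =>
      show e ⟨⁅z, y⁆, hmemC z y⟩ = 1
      have h : (⟨⁅z, y⁆, hmemC z y⟩ : commutator G) = 1 := by
        ext; exact hone' y z hz
      rw [h, map_one])
  -- package as a bilinear form over ZMod p
  let bfun : Additive (G ⧸ Subgroup.center G) → Additive (G ⧸ Subgroup.center G) → ZMod p :=
    fun a c => Multiplicative.toAdd (Φ (Additive.toMul a) (Additive.toMul c))
  have hadd1 : ∀ a b c : Additive (G ⧸ Subgroup.center G),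
      bfun (a + b) c = bfun a c + bfun b c := by
    intro a b c
    show Multiplicative.toAdd
      (Φ (Additive.toMul a * Additive.toMul b) (Additive.toMul c)) = _
    rw [map_mul, MonoidHom.mul_apply]
    rfl
  have hadd2 : ∀ a b c : Additive (G ⧸ Subgroup.center G),
      bfun a (b + c) = bfun a b + bfun a c := by
    intro a b c
    show Multiplicative.toAdd
      (Φ (Additive.toMul a) (Additive.toMul b * Additive.toMul c)) = _
    rw [map_mul]
    rfl
  let Bf : LinearMap.BilinForm (ZMod p) (Additive (G ⧸ Subgroup.center G)) :=
    LinearMap.mk₂ (ZMod p) bfun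
      (fun a b c => hadd1 a b c)
      (fun r a c =>
        ZMod.map_smul (AddMonoidHom.mk' (fun x => bfun x c) (fun u v => hadd1 u v c)) r a)
      (fun a b c => hadd2 a b c)
      (fun r a c =>
        ZMod.map_smul (AddMonoidHom.mk' (fun x => bfun a x) (fun u v => hadd2 a u v)) r c)
  have hBf : ∀ x y : G,
      bfun (Additive.ofMul (QuotientGroup.mk x)) (Additive.ofMul (QuotientGroup.mk y)) =
        Multiplicative.toAdd (e ⟨⁅x, y⁆, hmemC x y⟩) := fun x y => rfl
  -- alternating
  have halt : Bf.IsAlt := by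
    intro a
    obtain ⟨x, hx⟩ := QuotientGroup.mk_surjective (Additive.toMul a)
    have ha : a = Additive.ofMul (QuotientGroup.mk x) := by rw [hx]; rfl
    show bfun a a = 0
    rw [ha, hBf]
    have h : (⟨⁅x, x⁆, hmemC x x⟩ : commutator G) = 1 := by
      ext; exact commutatorElement_self x
    rw [h, map_one]
    rfl
  -- nondegenerate
  have hnd : Bf.Nondegenerate := by
    refine (LinearMap.IsRefl.nondegenerate_iff_separatingLeft halt.isRefl).mpr ?_
    intro a h
    obtain ⟨x, hx⟩ := QuotientGroup.mk_surjective (Additive.toMul a)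
    have ha : a = Additive.ofMul (QuotientGroup.mk x) := by rw [hx]; rfl
    rw [ha]
    have hxc : x ∈ Subgroup.center G := by
      rw [Subgroup.mem_center_iff]
      intro g
      have h1 : bfun a (Additive.ofMul (QuotientGroup.mk g)) = 0 :=
        h (Additive.ofMul (QuotientGroup.mk g))
      rw [ha, hBf] at h1
      have h2 : e ⟨⁅x, g⁆, hmemC x g⟩ = 1 := by
        have := congrArg (Multiplicative.ofAdd) h1
        simpa using this
      have h3 : (⟨⁅x, g⁆, hmemC x g⟩ : commutator G) = 1 := by
        apply e.injective
        rw [h2, map_one]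
      have h4 : ⁅x, g⁆ = 1 := by
        simpa [Subtype.ext_iff] using h3
      rw [commutatorElement_eq_one_iff_mul_comm] at h4
      exact h4.symm
    have : (QuotientGroup.mk x : G ⧸ Subgroup.center G) = 1 :=
      (QuotientGroup.eq_one_iff x).mpr hxc
    rw [this]
    rfl
  -- finiteness
  haveI hfinV : Finite (G ⧸ Subgroup.center G) := by
    apply Nat.finite_of_card_ne_zero
    rwa [← Subgroup.index_eq_card]
  haveI : Finite (Additive (G ⧸ Subgroup.center G)) := hfinV
  haveI hMF : Module.Finite (ZMod p) (Additive (G ⧸ Subgroup.center G)) :=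
    Module.Finite.of_finite (R := ZMod p)
  -- even dimension
  obtain ⟨r, hr⟩ := @even_finrank_of_alt_nondeg (ZMod p) _ _ _ _ hMF Bf halt hnd
  -- count
  haveI : Fintype (Additive (G ⧸ Subgroup.center G)) := Fintype.ofFinite _
  haveI : Fintype (G ⧸ Subgroup.center G) := Fintype.ofFinite _
  have hcount : (Subgroup.center G).index = p ^ (r + r) := by
    rw [Subgroup.index_eq_card]
    have h1 : Nat.card (G ⧸ Subgroup.center G) =
        Nat.card (Additive (G ⧸ Subgroup.center G)) := Nat.card_congr Additive.ofMul
    rw [h1, Nat.card_eq_fintype_card]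
    have h2 := card_eq_pow_finrank (K := ZMod p) (V := Additive (G ⧸ Subgroup.center G))
    rw [ZMod.card] at h2
    rw [h2, hr]
  -- dimension positive
  have hrpos : r ≠ 0 := by
    rintro rfl
    have h1 : (Subgroup.center G).index = 1 := by rw [hcount, pow_zero]
    have heq : Subgroup.center G = ⊤ := Subgroup.index_eq_one.mp h1
    have hcent : ∀ x : G, x ∈ Subgroup.center G := fun x => heq ▸ Subgroup.mem_top x
    have hbot : commutator G ≤ ⊥ := by
      rw [commutator, Subgroup.commutator_le]
      intro g1 _ g2 _
      rw [Subgroup.mem_bot]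
      exact hone g1 g2 (hcent g2)
    have hc1 : Nat.card (commutator G) = 1 := by
      rw [le_bot_iff.mp hbot, Subgroup.card_bot]
    have := hp.two_le
    omega
  exact ⟨r, by omega, by rw [hcount]; ring_nf⟩
end

section
/- Let p be a prime and G a group such that the commutator subgroup G' has order p, the subgroup G'·G^(p) is contained in Z(G), and the index [G : Z(G)] is finite. Then every subgroup C of G that is maximal among the commutative subgroups of G contains Z(G) and satisfies [C : Z(G)]² = [G : Z(G)]. -/
open Subgroup
open scoped commutatorElement
set_option maxHeartbeats 2000000 in

lemma aux_homcount (p : ℕ) (hp : p.Prime) (A : Type*) [CommGroup A] [Finite A]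
    (hA : ∀ a : A, a ^ p = 1) :
    Nat.card (A →* Multiplicative (ZMod p)) = Nat.card A := by
  haveI : NeZero p := ⟨hp.ne_zero⟩
  haveI : Fact p.Prime := ⟨hp⟩
  haveI : Module (ZMod p) (Additive A) := AddCommGroup.zmodModule (n := p) (by
    intro x
    apply Additive.toMul.injective
    rw [toMul_nsmul]
    exact hA _)
  have e1 : (A →* Multiplicative (ZMod p)) ≃ (Additive A →+ ZMod p) :=
    MonoidHom.toAdditiveLeft
  have e2 : (Additive A →+ ZMod p) ≃ (Additive A →ₗ[ZMod p] ZMod p) :=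
    { toFun := AddMonoidHom.toZModLinearMap p
      invFun := LinearMap.toAddMonoidHom
      left_inv := fun f => rfl
      right_inv := fun f => rfl }
  rw [Nat.card_congr (e1.trans e2)]
  haveI : Finite (Additive A) := ‹Finite A›
  haveI : Module.Finite (ZMod p) (Additive A) := Module.Finite.of_finite
  haveI : Finite (Additive A →ₗ[ZMod p] ZMod p) :=
    Finite.of_injective
      (fun (f : Additive A →ₗ[ZMod p] ZMod p) (x : Additive A) => f x)
      (fun f g h => LinearMap.ext fun x => congrFun h x)
  letI : Fintype (Additive A) := Fintype.ofFinite _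
  letI : Fintype (Additive A →ₗ[ZMod p] ZMod p) := Fintype.ofFinite _
  have h1 : Nat.card (Additive A →ₗ[ZMod p] ZMod p)
      = Fintype.card (ZMod p) ^ Module.finrank (ZMod p) (Module.Dual (ZMod p) (Additive A)) := by
    rw [Nat.card_eq_fintype_card]
    exact Module.card_eq_pow_finrank (K := ZMod p) (V := Module.Dual (ZMod p) (Additive A))
  have h2 : (Nat.card (Additive A) : ℕ)
      = Fintype.card (ZMod p) ^ Module.finrank (ZMod p) (Additive A) := by
    rw [Nat.card_eq_fintype_card]
    exact Module.card_eq_pow_finrank (K := ZMod p) (V := Additive A)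
  have h3 : Nat.card A = Nat.card (Additive A) := Nat.card_congr Additive.ofMul
  have h4 : Module.finrank (ZMod p) (Module.Dual (ZMod p) (Additive A))
      = Module.finrank (ZMod p) (Additive A) := Subspace.dual_finrank_eq
  rw [h1, h4, h3, h2]



lemma aux_closure_comm {G : Type*} [Group G] {S : Set G}
    (hS : ∀ a ∈ S, ∀ b ∈ S, a * b = b * a) :
    ∀ x ∈ Subgroup.closure S, ∀ y ∈ Subgroup.closure S, x * y = y * x := by
  intro x hx y hy
  have h1 : Subgroup.closure S ≤ Subgroup.centralizer S :=
    (Subgroup.closure_le _).2 fun a ha =>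
      Subgroup.mem_centralizer_iff.2 fun b hb => hS b hb a ha
  have hyc : ∀ a ∈ S, a * y = y * a := Subgroup.mem_centralizer_iff.1 (h1 hy)
  have h2 : Subgroup.closure S ≤ Subgroup.centralizer {y} :=
    (Subgroup.closure_le _).2 fun a ha =>
      Subgroup.mem_centralizer_iff.2 fun b hb => by
        rw [Set.mem_singleton_iff] at hb; subst hb
        exact (hyc a ha).symm
  exact (Subgroup.mem_centralizer_iff.1 (h2 hx) y rfl).symm

section Main
variable {G : Type*} [Group G] (p : ℕ) (hp : p.Prime)
  (hcard : Nat.card (commutator G) = p)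
  (hle : Subgroup.closure ((commutator G : Set G) ∪ {g : G | ∃ x : G, g = x ^ p}) ≤
      Subgroup.center G)
  (hfin : (Subgroup.center G).index ≠ 0)
  (C : Subgroup G) (hC : ∀ x ∈ C, ∀ y ∈ C, x * y = y * x)
  (hmax : ∀ D : Subgroup G, (∀ x ∈ D, ∀ y ∈ D, x * y = y * x) → C ≤ D → C = D)

include hle hC hmax

omit hC hmax in
lemma aux_hcent : ∀ a b : G, ⁅a, b⁆ ∈ Subgroup.center G := fun a b =>
  hle (Subgroup.subset_closure (Or.inl
    (by rw [_root_.commutator_def]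
        exact Subgroup.commutator_mem_commutator (Subgroup.mem_top a) (Subgroup.mem_top b))))

omit hC hmax in
lemma aux_hpow : ∀ x : G, x ^ p ∈ Subgroup.center G := fun x =>
  hle (Subgroup.subset_closure (Or.inr ⟨x, rfl⟩))

omit hle in
lemma aux_ZleC : Subgroup.center G ≤ C := by
  intro z hz
  have hScomm : ∀ a ∈ (↑C ∪ ↑(Subgroup.center G) : Set G),
      ∀ b ∈ (↑C ∪ ↑(Subgroup.center G) : Set G), a * b = b * a := by
    rintro a (ha | ha) b (hb | hb)
    · exact hC a ha b hb
    · exact Subgroup.mem_center_iff.1 hb a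
    · exact (Subgroup.mem_center_iff.1 ha b).symm
    · exact Subgroup.mem_center_iff.1 hb a
  have heq := hmax (Subgroup.closure (↑C ∪ ↑(Subgroup.center G)))
    (aux_closure_comm hScomm) (fun c hc => Subgroup.subset_closure (Or.inl hc))
  rw [heq]
  exact Subgroup.subset_closure (Or.inr hz)

omit hle in
lemma aux_centralizer : ∀ x : G, (∀ c ∈ C, x * c = c * x) → x ∈ C := by
  intro x hx
  have hScomm : ∀ a ∈ (↑C ∪ {x} : Set G), ∀ b ∈ (↑C ∪ {x} : Set G), a * b = b * a := by
    rintro a (ha | ha) b (hb | hb)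
    · exact hC a ha b hb
    · rw [Set.mem_singleton_iff] at hb; subst hb; exact (hx a ha).symm
    · rw [Set.mem_singleton_iff] at ha; subst ha; exact hx b hb
    · rw [Set.mem_singleton_iff] at ha hb; subst ha; subst hb; rfl
  have heq := hmax (Subgroup.closure (↑C ∪ {x}))
    (aux_closure_comm hScomm) (fun c hc => Subgroup.subset_closure (Or.inl hc))
  rw [heq]
  exact Subgroup.subset_closure (Or.inr rfl)

end Main


lemma aux_comm_left {G : Type*} [Group G]
    (hc : ∀ a b : G, ⁅a, b⁆ ∈ Subgroup.center G) (a b c : G) :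
    ⁅a * b, c⁆ = ⁅a, c⁆ * ⁅b, c⁆ := by
  have key : ⁅a * b, c⁆ = a * ⁅b, c⁆ * a⁻¹ * ⁅a, c⁆ := by
    simp only [commutatorElement_def]; group
  rw [key, Subgroup.mem_center_iff.1 (hc b c) a, mul_assoc ⁅b, c⁆,
    mul_inv_cancel, mul_one, Subgroup.mem_center_iff.1 (hc b c) ⁅a, c⁆]

lemma aux_comm_right {G : Type*} [Group G]
    (hc : ∀ a b : G, ⁅a, b⁆ ∈ Subgroup.center G) (a b c : G) :
    ⁅a, b * c⁆ = ⁅a, b⁆ * ⁅a, c⁆ :=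
  calc ⁅a, b * c⁆ = ⁅b * c, a⁆⁻¹ := by rw [commutatorElement_inv]
    _ = (⁅b, a⁆ * ⁅c, a⁆)⁻¹ := by rw [aux_comm_left hc]
    _ = ⁅c, a⁆⁻¹ * ⁅b, a⁆⁻¹ := mul_inv_rev _ _
    _ = ⁅a, c⁆ * ⁅a, b⁆ := by rw [commutatorElement_inv, commutatorElement_inv]
    _ = ⁅a, b⁆ * ⁅a, c⁆ := (Subgroup.mem_center_iff.1 (hc a c) ⁅a, b⁆).symm


lemma aux_count {G : Type*} [Group G] (p : ℕ) (hp : p.Prime)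
    (e : commutator G ≃* Multiplicative (ZMod p))
    (hcent : ∀ a b : G, ⁅a, b⁆ ∈ Subgroup.center G)
    (hpow : ∀ x : G, x ^ p ∈ Subgroup.center G)
    (C : Subgroup G) (hC : ∀ x ∈ C, ∀ y ∈ C, x * y = y * x)
    (hZC : Subgroup.center G ≤ C)
    (hcentz : ∀ x : G, (∀ c ∈ C, x * c = c * x) → x ∈ C)
    (hfinC : C.index ≠ 0) (hfinrel : (Subgroup.center G).relIndex C ≠ 0) :
    (Subgroup.center G).relIndex C = C.index := by
  have hK : ∀ a b : G, ⁅a, b⁆ ∈ commutator G := fun a b => by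
    rw [_root_.commutator_def]
    exact Subgroup.commutator_mem_commutator (Subgroup.mem_top a) (Subgroup.mem_top b)
  set M := Multiplicative (ZMod p)
  set β : G → G → M := fun g h => e ⟨⁅g, h⁆, hK g h⟩ with hβ
  have hβ_left : ∀ a b c : G, β (a * b) c = β a c * β b c := by
    intro a b c
    have h : (⟨⁅a * b, c⁆, hK _ _⟩ : commutator G)
        = ⟨⁅a, c⁆, hK _ _⟩ * ⟨⁅b, c⁆, hK _ _⟩ := Subtype.ext (aux_comm_left hcent a b c)
    show e _ = e _ * e _
    rw [h, map_mul]
  have hβ_right : ∀ a b c : G, β a (b * c) = β a b * β a c := by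
    intro a b c
    have h : (⟨⁅a, b * c⁆, hK _ _⟩ : commutator G)
        = ⟨⁅a, b⁆, hK _ _⟩ * ⟨⁅a, c⁆, hK _ _⟩ := Subtype.ext (aux_comm_right hcent a b c)
    show e _ = e _ * e _
    rw [h, map_mul]
  have hβ_one : ∀ a b : G, β a b = 1 ↔ a * b = b * a := by
    intro a b
    rw [hβ]
    simp only
    rw [MulEquiv.map_eq_one_iff]
    rw [show ((1 : commutator G) = ⟨1, (commutator G).one_mem⟩) from rfl]
    rw [Subtype.ext_iff]
    exact commutatorElement_eq_one_iff_mul_comm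
  -- normality of C
  haveI hCnorm : C.Normal := by
    constructor
    intro h hh g
    have hgh : g * h * g⁻¹ = ⁅g, h⁆ * h := by group
    rw [hgh]
    exact C.mul_mem (hZC (hcent g h)) hh
  set Z' : Subgroup C := (Subgroup.center G).subgroupOf C with hZ'
  haveI hZ'norm : Z'.Normal := by
    constructor
    intro n hn g
    have h : (g : G) * n = n * g := hC _ g.2 _ n.2
    have : g * n * g⁻¹ = n := by
      apply Subtype.ext
      push_cast
      rw [h, mul_assoc, mul_inv_cancel, mul_one]
    rw [this]; exact hn
  -- commutativity of quotients
  letI cg1 : CommGroup (C ⧸ Z') :=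
    { (inferInstance : Group (C ⧸ Z')) with
      mul_comm := fun a b => by
        induction a using QuotientGroup.induction_on with | H x =>
        induction b using QuotientGroup.induction_on with | H y =>
        rw [← QuotientGroup.mk_mul, ← QuotientGroup.mk_mul]
        exact congrArg _ (Subtype.ext (hC _ x.2 _ y.2 : (x : G) * y = y * x)) }
  letI cg2 : CommGroup (G ⧸ C) :=
    { (inferInstance : Group (G ⧸ C)) with
      mul_comm := fun a b => by
        induction a using QuotientGroup.induction_on with | H x =>
        induction b using QuotientGroup.induction_on with | H y =>
        rw [← QuotientGroup.mk_mul, ← QuotientGroup.mk_mul]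
        apply (QuotientGroup.eq (s := C)).2
        have : (x * y)⁻¹ * (y * x) = ⁅y⁻¹, x⁻¹⁆ := by
          simp only [commutatorElement_def]; group
        rw [this]
        exact hZC (hcent _ _) }
  -- finiteness
  haveI fin2 : Finite (G ⧸ C) := Nat.finite_of_card_ne_zero (by
    rwa [← Subgroup.index_eq_card])
  haveI fin1 : Finite (C ⧸ Z') := Nat.finite_of_card_ne_zero (by
    rw [← Subgroup.index_eq_card]
    exact hfinrel)
  -- exponent p
  have hA1pow : ∀ a : C ⧸ Z', a ^ p = 1 := by
    intro a
    induction a using QuotientGroup.induction_on with | H x =>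
    rw [← QuotientGroup.mk_pow]
    rw [QuotientGroup.eq_one_iff]
    rw [hZ', Subgroup.mem_subgroupOf]
    exact hpow (x : G)
  have hA2pow : ∀ a : G ⧸ C, a ^ p = 1 := by
    intro a
    induction a using QuotientGroup.induction_on with | H x =>
    rw [← QuotientGroup.mk_pow]
    rw [QuotientGroup.eq_one_iff]
    exact hZC (hpow x)
  -- the two homomorphisms
  have hvan1 : ∀ g : G, ∀ z ∈ Z', β g (z : G) = 1 := by
    intro g z hz
    rw [hβ_one]
    exact Subgroup.mem_center_iff.1 (Subgroup.mem_subgroupOf.1 hz) g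
  set Φ : G →* ((C ⧸ Z') →* M) :=
    MonoidHom.mk' (fun g => QuotientGroup.lift Z'
      (MonoidHom.mk' (fun c : C => β g (c : G))
        (fun c d => hβ_right g c d))
      (hvan1 g))
      (by
        intro a b
        ext q
        show β (a * b) _ = _
        exact hβ_left a b q) with hΦ
  have hkerΦ : Φ.ker = C := by
    ext g
    rw [MonoidHom.mem_ker]
    constructor
    · intro h
      apply hcentz
      intro c hc
      have h2 := DFunLike.congr_fun h (QuotientGroup.mk (⟨c, hc⟩ : C))
      rw [← hβ_one]
      exact h2
    · intro hg
      ext q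
      show β g (q : G) = 1
      exact (hβ_one _ _).2 (hC g hg _ q.2)
  have hvan2 : ∀ c : C, ∀ g ∈ C, β (c : G) g = 1 := fun c g hg =>
    (hβ_one _ _).2 (hC _ c.2 g hg)
  set Ψ : C →* ((G ⧸ C) →* M) :=
    MonoidHom.mk' (fun c => QuotientGroup.lift C
      (MonoidHom.mk' (fun g : G => β (c : G) g) (fun a b => hβ_right _ a b))
      (fun g hg => hvan2 c g hg))
      (by
        intro a b
        ext q
        show β ((a * b : C) : G) _ = _
        exact hβ_left (a : G) (b : G) q) with hΨ
  have hkerΨ : Ψ.ker = Z' := by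
    ext c
    rw [MonoidHom.mem_ker]
    constructor
    · intro h
      rw [hZ', Subgroup.mem_subgroupOf]
      rw [Subgroup.mem_center_iff]
      intro g
      have h2 := DFunLike.congr_fun h (QuotientGroup.mk g)
      exact ((hβ_one _ _).1 h2).symm
    · intro hc
      ext q
      show β (c : G) q = 1
      exact (hβ_one _ _).2
        ((Subgroup.mem_center_iff.1 (Subgroup.mem_subgroupOf.1 hc) _).symm)
  haveI : NeZero p := ⟨hp.ne_zero⟩
  haveI : Finite M := Finite.of_equiv (ZMod p) Multiplicative.ofAdd
  haveI : Finite ((C ⧸ Z') →* M) :=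
    Finite.of_injective (fun f => (f : (C ⧸ Z') → M)) DFunLike.coe_injective
  haveI : Finite ((G ⧸ C) →* M) :=
    Finite.of_injective (fun f => (f : (G ⧸ C) → M)) DFunLike.coe_injective
  have hcount1 : Nat.card ((C ⧸ Z') →* M) = Nat.card (C ⧸ Z') :=
    aux_homcount p hp _ hA1pow
  have hcount2 : Nat.card ((G ⧸ C) →* M) = Nat.card (G ⧸ C) :=
    aux_homcount p hp _ hA2pow
  have hrel : (Subgroup.center G).relIndex C = Nat.card (C ⧸ Z') :=
    Subgroup.index_eq_card Z'
  have hidx : C.index = Nat.card (G ⧸ C) := Subgroup.index_eq_card C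
  have le1 : C.index ≤ (Subgroup.center G).relIndex C := by
    calc C.index = Nat.card (G ⧸ C) := hidx
      _ = Nat.card (G ⧸ Φ.ker) :=
          Nat.card_congr (QuotientGroup.quotientMulEquivOfEq hkerΦ.symm).toEquiv
      _ ≤ Nat.card ((C ⧸ Z') →* M) :=
          Nat.card_le_card_of_injective _ (QuotientGroup.kerLift_injective Φ)
      _ = Nat.card (C ⧸ Z') := hcount1
      _ = (Subgroup.center G).relIndex C := hrel.symm
  have le2 : (Subgroup.center G).relIndex C ≤ C.index := by
    calc (Subgroup.center G).relIndex C = Nat.card (C ⧸ Z') := hrel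
      _ = Nat.card (C ⧸ Ψ.ker) :=
          Nat.card_congr (QuotientGroup.quotientMulEquivOfEq hkerΨ.symm).toEquiv
      _ ≤ Nat.card ((G ⧸ C) →* M) :=
          Nat.card_le_card_of_injective _ (QuotientGroup.kerLift_injective Ψ)
      _ = Nat.card (G ⧸ C) := hcount2
      _ = C.index := hidx.symm
  exact le_antisymm le2 le1


/-- Let `p` be a prime and `G` a group such that the commutator
subgroup `G'` has order `p`, the subgroup `G'·G^(p)` lies in the centre of `G`,
and `[G : Z(G)]` is finite. Then every maximal commutative subgroup `C` of `G`
contains `Z(G)` and satisfies `[C : Z(G)]² = [G : Z(G)]`. -/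
theorem stmt_13 {G : Type*} [Group G] (p : ℕ) (hp : p.Prime)
    (hcard : Nat.card (commutator G) = p)
    (hle : Subgroup.closure ((commutator G : Set G) ∪ {g : G | ∃ x : G, g = x ^ p}) ≤
      Subgroup.center G)
    (hfin : (Subgroup.center G).index ≠ 0) :
    ∀ C : Subgroup G, (∀ x ∈ C, ∀ y ∈ C, x * y = y * x) →
      (∀ D : Subgroup G, (∀ x ∈ D, ∀ y ∈ D, x * y = y * x) → C ≤ D → C = D) →
      Subgroup.center G ≤ C ∧
        ((Subgroup.center G).relIndex C) ^ 2 = (Subgroup.center G).index := by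
  intro C hC hmax
  have hcent := aux_hcent (G := G) p hle
  have hpow := aux_hpow (G := G) p hle
  have hZC : Subgroup.center G ≤ C := aux_ZleC C hC hmax
  have hcentz := aux_centralizer C hC hmax
  have hrel_mul : (Subgroup.center G).relIndex C * C.index = (Subgroup.center G).index :=
    Subgroup.relIndex_mul_index hZC
  have hfinC : C.index ≠ 0 := fun h => hfin (by rw [← hrel_mul, h, mul_zero])
  have hfinrel : (Subgroup.center G).relIndex C ≠ 0 :=
    fun h => hfin (by rw [← hrel_mul, h, zero_mul])
  haveI : Fact p.Prime := ⟨hp⟩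
  haveI : NeZero p := ⟨hp.ne_zero⟩
  have e : commutator G ≃* Multiplicative (ZMod p) :=
    mulEquivOfPrimeCardEq hcard (by
      rw [Nat.card_congr (Multiplicative.toAdd (α := ZMod p)), Nat.card_zmod])
  have key := aux_count p hp e hcent hpow C hC hZC hcentz hfinC hfinrel
  refine ⟨hZC, ?_⟩
  rw [pow_two, ← hrel_mul, key]
end

section
/- Let G be a group whose commutator subgroup G' has order 2, with x² ∈ G' for every x ∈ G, let K := {x ∈ Z(G) : x² = e}, and suppose K ≠ Z(G). Then the assignment T ↦ T·Z(G) is a bijection from the set of subgroups T of G with K ≤ T and t² = e for all t ∈ T, onto the set of commutative subgroups C of G with Z(G) ≤ C; its inverse is given by C ↦ {x ∈ C : x² = e}. -/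
/-- The subgroup `K = {x ∈ Z(G) : x² = e}` of a group `G`. -/
def centralInvolutions (G : Type*) [Group G] : Subgroup G where
  carrier := {x | x ∈ Subgroup.center G ∧ x ^ 2 = 1}
  one_mem' := ⟨Subgroup.one_mem _, one_pow 2⟩
  mul_mem' := by
    intro a b ha hb
    refine ⟨mul_mem ha.1 hb.1, ?_⟩
    have hc : Commute a b := (Subgroup.mem_center_iff.mp hb.1 a)
    rw [hc.mul_pow, ha.2, hb.2, one_mul]
  inv_mem' := by
    intro a ha
    exact ⟨inv_mem ha.1, by rw [inv_pow, ha.2, inv_one]⟩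

lemma card_two_unique {G : Type*} [Group G] {H : Subgroup G}
    (h : Nat.card H = 2) {a b : G} (ha : a ∈ H) (hb : b ∈ H)
    (ha1 : a ≠ 1) (hb1 : b ≠ 1) : a = b := by
  obtain ⟨x, y, hxy, hU⟩ := Nat.card_eq_two_iff.mp h
  have h1 : (1 : H) ∈ ({x, y} : Set H) := hU ▸ Set.mem_univ _
  have hA : (⟨a, ha⟩ : H) ∈ ({x, y} : Set H) := hU ▸ Set.mem_univ _
  have hB : (⟨b, hb⟩ : H) ∈ ({x, y} : Set H) := hU ▸ Set.mem_univ _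
  have ha1' : (⟨a, ha⟩ : H) ≠ 1 := fun h => ha1 (congrArg Subtype.val h)
  have hb1' : (⟨b, hb⟩ : H) ≠ 1 := fun h => hb1 (congrArg Subtype.val h)
  rcases h1 with h1 | h1 <;> rcases hA with hA | hA <;> rcases hB with hB | hB <;>
    first
      | (exfalso; exact ha1' (hA.trans h1.symm))
      | (exfalso; exact hb1' (hB.trans h1.symm))
      | (exact congrArg Subtype.val (hA.trans hB.symm))

/-- Let `G` be a group whose commutator subgroup has order `2`,
with `x² ∈ G'` for every `x ∈ G`, let `K = {x ∈ Z(G) : x² = e}`, and suppose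
`K ≠ Z(G)`. Then `T ↦ T·Z(G)` is a bijection from the set of subgroups `T` of
`G` of exponent dividing `2` containing `K` onto the set of commutative
subgroups `C` of `G` containing `Z(G)`, with inverse `C ↦ {x ∈ C : x² = e}`. -/
theorem stmt_14 {G : Type*} [Group G] (hcard : Nat.card (commutator G) = 2)
    (hsq : ∀ x : G, x ^ 2 ∈ commutator G)
    (hne : centralInvolutions G ≠ Subgroup.center G) :
    (∀ T : Subgroup G, centralInvolutions G ≤ T → (∀ t ∈ T, t ^ 2 = 1) →
      Subgroup.center G ≤ T ⊔ Subgroup.center G ∧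
      ∀ x ∈ T ⊔ Subgroup.center G, ∀ y ∈ T ⊔ Subgroup.center G, x * y = y * x) ∧
    (∀ C : Subgroup G, Subgroup.center G ≤ C → (∀ x ∈ C, ∀ y ∈ C, x * y = y * x) →
      ∃! T : Subgroup G,
        (centralInvolutions G ≤ T ∧ ∀ t ∈ T, t ^ 2 = 1) ∧ T ⊔ Subgroup.center G = C) ∧
    (∀ T : Subgroup G, centralInvolutions G ≤ T → (∀ t ∈ T, t ^ 2 = 1) →
      (T : Set G) = {x | x ∈ T ⊔ Subgroup.center G ∧ x ^ 2 = 1}) := by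
  -- squares with nontrivial square coincide
  have hsqeq : ∀ a b : G, a ^ 2 ≠ 1 → b ^ 2 ≠ 1 → a ^ 2 = b ^ 2 := fun a b ha hb =>
    card_two_unique hcard (hsq a) (hsq b) ha hb
  -- decomposition of sup with center
  have mem_sup : ∀ (T : Subgroup G) (x : G), x ∈ T ⊔ Subgroup.center G ↔
      ∃ t ∈ T, ∃ w ∈ Subgroup.center G, t * w = x := by
    intro T x
    rw [← SetLike.mem_coe, Subgroup.mul_normal T (Subgroup.center G)]
    exact Set.mem_mul
  -- key lemma: involutions in T ⊔ Z lie in T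
  have key : ∀ T : Subgroup G, centralInvolutions G ≤ T → (∀ t ∈ T, t ^ 2 = 1) →
      ∀ x : G, x ∈ T ⊔ Subgroup.center G → x ^ 2 = 1 → x ∈ T := by
    intro T hKT hT2 x hx hx2
    obtain ⟨t, htT, w, hwZ, rfl⟩ := (mem_sup T x).mp hx
    have hcw : Commute t w := Subgroup.mem_center_iff.mp hwZ t
    have hw2 : w ^ 2 = 1 := by
      have := hcw.mul_pow 2
      rw [hx2, hT2 t htT, one_mul] at this
      exact this.symm
    exact mul_mem htT (hKT ⟨hwZ, hw2⟩)
  refine ⟨?_, ?_, ?_⟩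
  · intro T hKT hT2
    refine ⟨le_sup_right, ?_⟩
    intro x hx y hy
    obtain ⟨t, htT, w, hwZ, rfl⟩ := (mem_sup T x).mp hx
    obtain ⟨s, hsT, v, hvZ, rfl⟩ := (mem_sup T y).mp hy
    have hts : Commute t s := by
      have h2 : (t * s) * (t * s) = 1 := by
        have := hT2 _ (mul_mem htT hsT); rwa [pow_two] at this
      have hsinv : s⁻¹ = s := inv_eq_of_mul_eq_one_right
        (by have := hT2 s hsT; rwa [pow_two] at this)
      have htinv : t⁻¹ = t := inv_eq_of_mul_eq_one_right
        (by have := hT2 t htT; rwa [pow_two] at this)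
      have : t * s = (t * s)⁻¹ := eq_inv_of_mul_eq_one_left h2
      rw [mul_inv_rev, hsinv, htinv] at this
      exact this
    have h1 : Commute t (s * v) := hts.mul_right (Subgroup.mem_center_iff.mp hvZ t)
    have hws : Commute w s := (Subgroup.mem_center_iff.mp hwZ s).symm
    have h2 : Commute w (s * v) := hws.mul_right (Subgroup.mem_center_iff.mp hvZ w)
    exact (h1.mul_left h2).eq
  · intro C hZC hCcomm
    -- c : central element with c^2 ≠ 1
    have hlt : centralInvolutions G < Subgroup.center G :=
      lt_of_le_of_ne (fun x hx => hx.1) hne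
    obtain ⟨c, hcZ, hcK⟩ := SetLike.exists_of_lt hlt
    have hc2 : c ^ 2 ≠ 1 := fun h => hcK ⟨hcZ, h⟩
    refine ⟨{  carrier := {x | x ∈ C ∧ x ^ 2 = 1}
               one_mem' := ⟨C.one_mem, one_pow 2⟩
               mul_mem' := by
                 intro a b ha hb
                 refine ⟨C.mul_mem ha.1 hb.1, ?_⟩
                 have hc : Commute a b := hCcomm a ha.1 b hb.1
                 rw [hc.mul_pow, ha.2, hb.2, one_mul]
               inv_mem' := by
                 intro a ha
                 exact ⟨C.inv_mem ha.1, by rw [inv_pow, ha.2, inv_one]⟩ }, ?_, ?_⟩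
    · refine ⟨⟨fun x hx => ⟨hZC hx.1, hx.2⟩, fun t ht => ht.2⟩, ?_⟩
      apply le_antisymm
      · exact sup_le (fun x hx => hx.1) hZC
      · intro x hx
        by_cases hx2 : x ^ 2 = 1
        · exact le_sup_left (α := Subgroup G) (⟨hx, hx2⟩ : x ∈ C ∧ x ^ 2 = 1)
        · have hxc : (x * c⁻¹) ^ 2 = 1 := by
            have hcm : Commute x c⁻¹ := (Subgroup.mem_center_iff.mp (inv_mem hcZ) x)
            rw [hcm.mul_pow, inv_pow, hsqeq x c hx2 hc2, mul_inv_cancel]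
          have hmem : x * c⁻¹ ∈ C := C.mul_mem hx (C.inv_mem (hZC hcZ))
          have : x = (x * c⁻¹) * c := by group
          rw [this]
          exact mul_mem (le_sup_left (α := Subgroup G)
            (⟨hmem, hxc⟩ : x * c⁻¹ ∈ C ∧ (x * c⁻¹) ^ 2 = 1)) (le_sup_right (α := Subgroup G) hcZ)
    · intro T' ⟨⟨hKT', hT'2⟩, hsupT'⟩
      ext x
      constructor
      · intro hx
        exact ⟨hsupT' ▸ (le_sup_left (α := Subgroup G) hx : x ∈ T' ⊔ Subgroup.center G),
          hT'2 x hx⟩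
      · intro ⟨hxC, hx2⟩
        exact key T' hKT' hT'2 x (hsupT' ▸ hxC) hx2
  · intro T hKT hT2
    ext x
    simp only [SetLike.mem_coe, Set.mem_setOf_eq]
    exact ⟨fun hx => ⟨le_sup_left (α := Subgroup G) hx, hT2 x hx⟩,
      fun ⟨hx, hx2⟩ => key T hKT hT2 x hx hx2⟩
end
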